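/- Let (Ω, 𝓕, ℙ) be a probability space, p ∈ [1, ∞) and a ∈ [0,1]. Then the map ρ_{p,a}: L^p(Ω,𝓕,ℙ) → ℝ defined by ρ_{p,a}(X) := 𝔼[X] + a·(𝔼[((X − 𝔼[X])⁺)^p])^{1/p} is a law-invariant coherent risk measure, i.e., it satisfies: (monotonicity) ρ_{p,a}(X) ≤ ρ_{p,a}(Y) whenever X ≤ Y ℙ-a.s.; (translation-equivariance) ρ_{p,a}(X + m) = ρ_{p,a}(X) + m for all m ∈ ℝ; (subadditivity) ρ_{p,a}(X + Y) ≤ ρ_{p,a}(X) + ρ_{p,a}(Y); (positive homogeneity) ρ_{p,a}(λX) = λ·ρ_{p,a}(X) for all λ ≥ 0; and ρ_{p,a}(X) = ρ_{p,a}(Y) whenever X and Y have the same distribution. -/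

import Mathlib

open MeasureTheory Filter Set

section aux
variable {Ω : Type*} [MeasurableSpace Ω] {P : Measure Ω} [IsProbabilityMeasure P] {p : ℝ}

lemma osm_eq_eLpNorm (hp : 1 ≤ p) (f : Ω → ℝ) (hf : MemLp f (ENNReal.ofReal p) P) :
    (∫ ω, max (f ω) 0 ^ p ∂P) ^ (1 / p)
      = (eLpNorm (fun ω => max (f ω) 0) (ENNReal.ofReal p) P).toReal := by
  have hp0 : 0 < p := lt_of_lt_of_le one_pos hp
  have hq0 : ENNReal.ofReal p ≠ 0 := by simp [ENNReal.ofReal_eq_zero, not_le, hp0]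
  have hqt : ENNReal.ofReal p ≠ ⊤ := ENNReal.ofReal_ne_top
  have htq : (ENNReal.ofReal p).toReal = p := ENNReal.toReal_ofReal hp0.le
  rw [(hf.pos_part).eLpNorm_eq_integral_rpow_norm hq0 hqt]
  rw [ENNReal.toReal_ofReal (Real.rpow_nonneg (integral_nonneg fun ω => by positivity) _)]
  congr 1
  · apply integral_congr_ae
    filter_upwards with ω
    rw [htq, Real.norm_eq_abs, abs_of_nonneg (le_max_right _ _)]
  · rw [htq, one_div]

end aux

/-- The risk measure based on one-sided moments:
`ρ_{p,a}(X) = E[X] + a · E[((X - E[X])⁺)^p]^{1/p}`. -/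
noncomputable def rhoOSM {Ω : Type*} [MeasurableSpace Ω] (P : Measure Ω) (p a : ℝ)
    (X : Ω → ℝ) : ℝ :=
  (∫ ω, X ω ∂P) + a * (∫ ω, max (X ω - ∫ ω', X ω' ∂P) 0 ^ p ∂P) ^ (1 / p)

section aux2
variable {Ω : Type*} [MeasurableSpace Ω] {P : Measure Ω} [IsProbabilityMeasure P] {p : ℝ}

lemma rhoOSM_eq (hp : 1 ≤ p) (a : ℝ) (X : Ω → ℝ) (hX : MemLp X (ENNReal.ofReal p) P) :
    rhoOSM P p a X = (∫ ω, X ω ∂P)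
      + a * (eLpNorm (fun ω => max (X ω - ∫ ω', X ω' ∂P) 0) (ENNReal.ofReal p) P).toReal := by
  unfold rhoOSM
  rw [osm_eq_eLpNorm hp (fun ω => X ω - ∫ ω', X ω' ∂P) (hX.sub (memLp_const _))]

end aux2

/-- **Example 2 of the paper.** For `p ∈ [1,∞)` and `a ∈ [0,1]`, the one-sided-moment risk
measure `ρ_{p,a}` on `L^p` is a law-invariant coherent risk measure: it is monotone,
translation-equivariant, subadditive, positively homogeneous, and law-invariant. -/
theorem rhoOSM_law_invariant_coherent
    {Ω : Type*} [MeasurableSpace Ω] (P : Measure Ω) [IsProbabilityMeasure P]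
    (p a : ℝ) (hp : 1 ≤ p) (ha0 : 0 ≤ a) (ha1 : a ≤ 1) :
    -- monotonicity
    (∀ X Y : Ω → ℝ, MemLp X (ENNReal.ofReal p) P → MemLp Y (ENNReal.ofReal p) P →
      (∀ᵐ ω ∂P, X ω ≤ Y ω) → rhoOSM P p a X ≤ rhoOSM P p a Y) ∧
    -- translation-equivariance
    (∀ X : Ω → ℝ, MemLp X (ENNReal.ofReal p) P → ∀ m : ℝ,
      rhoOSM P p a (fun ω => X ω + m) = rhoOSM P p a X + m) ∧
    -- subadditivity
    (∀ X Y : Ω → ℝ, MemLp X (ENNReal.ofReal p) P → MemLp Y (ENNReal.ofReal p) P →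
      rhoOSM P p a (fun ω => X ω + Y ω) ≤ rhoOSM P p a X + rhoOSM P p a Y) ∧
    -- positive homogeneity
    (∀ X : Ω → ℝ, MemLp X (ENNReal.ofReal p) P → ∀ lam : ℝ, 0 ≤ lam →
      rhoOSM P p a (fun ω => lam * X ω) = lam * rhoOSM P p a X) ∧
    -- law-invariance
    (∀ X Y : Ω → ℝ, MemLp X (ENNReal.ofReal p) P → MemLp Y (ENNReal.ofReal p) P →
      Measure.map X P = Measure.map Y P → rhoOSM P p a X = rhoOSM P p a Y) := by
  have hp0 : 0 < p := lt_of_lt_of_le one_pos hp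
  have hq1 : (1 : ENNReal) ≤ ENNReal.ofReal p := ENNReal.one_le_ofReal.mpr hp
  have hq0 : ENNReal.ofReal p ≠ 0 := by simp [ENNReal.ofReal_eq_zero, not_le, hp0]
  refine ⟨?_, ?_, ?_, ?_, ?_⟩
  -- monotonicity
  · intro X Y hX hY hXY
    have hIX := hX.integrable hq1
    have hIY := hY.integrable hq1
    set cX := ∫ ω, X ω ∂P with hcX
    set cY := ∫ ω, Y ω ∂P with hcY
    have hc : cX ≤ cY := integral_mono_ae hIX hIY hXY
    have hmY : MemLp (fun ω => max (Y ω - cY) 0) (ENNReal.ofReal p) P :=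
      (hY.sub (memLp_const _)).pos_part
    have hpt : ∀ᵐ ω ∂P, ‖max (X ω - cX) 0‖ ≤ ‖max (Y ω - cY) 0 + (cY - cX)‖ := by
      filter_upwards [hXY] with ω h
      have h0 : (0:ℝ) ≤ max (Y ω - cY) 0 + (cY - cX) :=
        add_nonneg (le_max_right _ _) (sub_nonneg.2 hc)
      rw [Real.norm_eq_abs, Real.norm_eq_abs, abs_of_nonneg (le_max_right _ _),
        abs_of_nonneg h0]
      refine max_le ?_ h0
      have : X ω - cX ≤ (Y ω - cY) + (cY - cX) := by linarith
      exact this.trans (by gcongr; exact le_max_left _ _)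
    have h1 := eLpNorm_mono_ae (p := ENNReal.ofReal p) (μ := P) hpt
    have h2 : eLpNorm (fun ω => max (Y ω - cY) 0 + (cY - cX)) (ENNReal.ofReal p) P ≤
        eLpNorm (fun ω => max (Y ω - cY) 0) (ENNReal.ofReal p) P
          + eLpNorm (fun _ : Ω => cY - cX) (ENNReal.ofReal p) P :=
      eLpNorm_add_le hmY.aestronglyMeasurable aestronglyMeasurable_const hq1
    have h3 : eLpNorm (fun _ : Ω => cY - cX) (ENNReal.ofReal p) P
        = ENNReal.ofReal (cY - cX) := by
      rw [eLpNorm_const _ hq0 (NeZero.ne P)]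
      simp [measure_univ, Real.enorm_eq_ofReal (sub_nonneg.2 hc)]
    have h5 := (h1.trans h2)
    rw [h3] at h5
    have h6 := ENNReal.toReal_mono
      (ENNReal.add_ne_top.mpr ⟨hmY.eLpNorm_ne_top, ENNReal.ofReal_ne_top⟩) h5
    rw [ENNReal.toReal_add hmY.eLpNorm_ne_top ENNReal.ofReal_ne_top,
      ENNReal.toReal_ofReal (sub_nonneg.2 hc)] at h6
    rw [rhoOSM_eq hp a X hX, rhoOSM_eq hp a Y hY, ← hcX, ← hcY]
    have haux := mul_le_mul_of_nonneg_left h6 ha0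
    have haux2 : a * (cY - cX) ≤ 1 * (cY - cX) :=
      mul_le_mul_of_nonneg_right ha1 (sub_nonneg.2 hc)
    nlinarith
  -- translation-equivariance
  · intro X hX m
    have hIX := hX.integrable hq1
    have hint : ∫ ω, (X ω + m) ∂P = (∫ ω, X ω ∂P) + m := by
      rw [integral_add hIX (integrable_const m), integral_const]; simp
    unfold rhoOSM
    rw [hint]
    have hfun : (fun ω => max (X ω + m - ((∫ ω', X ω' ∂P) + m)) 0 ^ p)
        = fun ω => max (X ω - ∫ ω', X ω' ∂P) 0 ^ p := by
      funext ω; congr 2; ring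
    calc ((∫ ω, X ω ∂P) + m)
        + a * (∫ ω, max (X ω + m - ((∫ ω', X ω' ∂P) + m)) 0 ^ p ∂P) ^ (1 / p)
        = ((∫ ω, X ω ∂P) + m)
        + a * (∫ ω, max (X ω - ∫ ω', X ω' ∂P) 0 ^ p ∂P) ^ (1 / p) := by rw [hfun]
      _ = _ := by ring
  -- subadditivity
  · intro X Y hX hY
    have hIX := hX.integrable hq1
    have hIY := hY.integrable hq1
    set cX := ∫ ω, X ω ∂P with hcX
    set cY := ∫ ω, Y ω ∂P with hcY
    have hXY : MemLp (fun ω => X ω + Y ω) (ENNReal.ofReal p) P := hX.add hY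
    have hint : ∫ ω, (X ω + Y ω) ∂P = cX + cY := integral_add hIX hIY
    have hmX : MemLp (fun ω => max (X ω - cX) 0) (ENNReal.ofReal p) P :=
      (hX.sub (memLp_const _)).pos_part
    have hmY : MemLp (fun ω => max (Y ω - cY) 0) (ENNReal.ofReal p) P :=
      (hY.sub (memLp_const _)).pos_part
    have hpt : ∀ᵐ ω ∂P, ‖max (X ω + Y ω - (cX + cY)) 0‖
        ≤ ‖max (X ω - cX) 0 + max (Y ω - cY) 0‖ := by
      filter_upwards with ω
      have h0 : (0:ℝ) ≤ max (X ω - cX) 0 + max (Y ω - cY) 0 :=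
        add_nonneg (le_max_right _ _) (le_max_right _ _)
      rw [Real.norm_eq_abs, Real.norm_eq_abs, abs_of_nonneg (le_max_right _ _),
        abs_of_nonneg h0]
      refine max_le ?_ h0
      have : X ω + Y ω - (cX + cY) = (X ω - cX) + (Y ω - cY) := by ring
      rw [this]
      gcongr <;> exact le_max_left _ _
    have h1 := eLpNorm_mono_ae (p := ENNReal.ofReal p) (μ := P) hpt
    have h2 : eLpNorm (fun ω => max (X ω - cX) 0 + max (Y ω - cY) 0) (ENNReal.ofReal p) P ≤
        eLpNorm (fun ω => max (X ω - cX) 0) (ENNReal.ofReal p) P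
          + eLpNorm (fun ω => max (Y ω - cY) 0) (ENNReal.ofReal p) P :=
      eLpNorm_add_le hmX.aestronglyMeasurable hmY.aestronglyMeasurable hq1
    have h6 := ENNReal.toReal_mono
      (ENNReal.add_ne_top.mpr ⟨hmX.eLpNorm_ne_top, hmY.eLpNorm_ne_top⟩) (h1.trans h2)
    rw [ENNReal.toReal_add hmX.eLpNorm_ne_top hmY.eLpNorm_ne_top] at h6
    rw [rhoOSM_eq hp a _ hXY, rhoOSM_eq hp a X hX, rhoOSM_eq hp a Y hY, ← hcX, ← hcY]
    simp only [hint]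
    have haux := mul_le_mul_of_nonneg_left h6 ha0
    linarith
  -- positive homogeneity
  · intro X hX lam hlam
    have hlX : MemLp (fun ω => lam * X ω) (ENNReal.ofReal p) P := hX.const_mul lam
    have hint : ∫ ω, lam * X ω ∂P = lam * ∫ ω, X ω ∂P := integral_const_mul lam X
    rw [rhoOSM_eq hp a _ hlX, rhoOSM_eq hp a X hX]
    simp only [hint]
    set c := ∫ ω, X ω ∂P with hc
    have hfun : (fun ω => max (lam * X ω - lam * c) 0)
        = lam • (fun ω => max (X ω - c) 0) := by
      funext ω
      simp only [Pi.smul_apply, smul_eq_mul]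
      rw [mul_max_of_nonneg _ _ hlam, mul_zero, mul_sub]
    rw [hfun, eLpNorm_const_smul, ENNReal.toReal_mul, toReal_enorm,
      Real.norm_eq_abs, abs_of_nonneg hlam]
    ring
  -- law-invariance
  · intro X Y hX hY hmap
    have hXm := hX.aestronglyMeasurable.aemeasurable
    have hYm := hY.aestronglyMeasurable.aemeasurable
    have hmean : ∫ ω, X ω ∂P = ∫ ω, Y ω ∂P := by
      have h1 := integral_map (φ := X) hXm (f := fun t : ℝ => t)
        measurable_id.aestronglyMeasurable
      have h2 := integral_map (φ := Y) hYm (f := fun t : ℝ => t)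
        measurable_id.aestronglyMeasurable
      rw [← h1, hmap, h2]
    set c := ∫ ω, X ω ∂P with hc
    have hcont : Continuous (fun t : ℝ => max (t - c) 0 ^ p) :=
      ((continuous_id.sub continuous_const).max continuous_const).rpow_const
        (fun t => Or.inr hp0.le)
    have h2 : ∫ ω, max (X ω - c) 0 ^ p ∂P = ∫ ω, max (Y ω - c) 0 ^ p ∂P := by
      rw [← integral_map hXm hcont.aestronglyMeasurable, hmap,
        integral_map hYm hcont.aestronglyMeasurable]
    unfold rhoOSM
    rw [← hmean, h2]
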